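/- (VOC dominates VOC' for static values in MDPs.) In the n-step MDP setting with a sub-σ-algebra 𝒢 ⊆ 𝓕, fix a state s and let a* ∈ A_s maximize a ↦ φ_n(s,a) over A_s. Then E[max_{a∈A_s} φ_n^𝒢(s,a)] − max_{a∈A_s} φ_n(s,a) ≥ E[max_{a∈A_s} φ_n^𝒢(s,a) − φ_n^𝒢(s,a*)]; that is, VOC(𝒢; φ_n, s) ≥ VOC'(𝒢; φ_n, s). -/

import Mathlib

open MeasureTheory

/-- Pointwise `n`-step backup of the random frontier values `Z`:
`Υ_0(s,a) = Z(s,a)` and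
`Υ_{n+1}(s,a) = Σ_{s'} P(s,a,s')·(R(s,a,s') + γ·max_{a' ∈ A_{s'}} Υ_n(s',a'))`. -/
noncomputable def Upsilon {Ω S A : Type*} [Fintype S] (As : S → Finset A)
    (hAs : ∀ s, (As s).Nonempty) (P R : S → A → S → ℝ) (γ : ℝ)
    (Z : S → A → Ω → ℝ) : ℕ → S → A → Ω → ℝ
  | 0 => fun s a ω => Z s a ω
  | n + 1 => fun s a ω => ∑ s' : S, P s a s' *
      (R s a s' + γ * (As s').sup' (hAs s') fun a' => Upsilon As hAs P R γ Z n s' a' ω)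

/-- Deterministic `n`-step backup of a base value function: used for the static value `φ_n`
(base `(s,a) ↦ E[Z(s,a)]`) and, pointwise in `ω`, for the conditional static value `φ_n^𝒢`
(base `(s,a) ↦ E[Z(s,a)|𝒢](ω)`). -/
noncomputable def stepValue {S A : Type*} [Fintype S] (As : S → Finset A)
    (hAs : ∀ s, (As s).Nonempty) (P R : S → A → S → ℝ) (γ : ℝ)
    (base : S → A → ℝ) : ℕ → S → A → ℝ
  | 0 => base
  | n + 1 => fun s a => ∑ s' : S, P s a s' *
      (R s a s' + γ * (As s').sup' (hAs s') fun a' => stepValue As hAs P R γ base n s' a')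


lemma integrable_finsetSup' {Ω A : Type*} {mΩ : MeasurableSpace Ω} {μ : Measure Ω}
    (t : Finset A) (ht : t.Nonempty) (f : A → Ω → ℝ)
    (hf : ∀ a ∈ t, Integrable (f a) μ) :
    Integrable (fun ω => t.sup' ht fun a => f a ω) μ := by
  induction ht using Finset.Nonempty.cons_induction with
  | singleton a => simpa using hf a (by simp)
  | cons a s ha hs ih =>
      simp only [Finset.sup'_cons hs]
      exact (hf a (by simp)).sup (ih fun b hb => hf b (Finset.mem_cons_of_mem hb))

lemma integrable_stepValue {Ω S A : Type*} {mΩ : MeasurableSpace Ω} {μ : Measure Ω}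
    [IsProbabilityMeasure μ] [Fintype S] (As : S → Finset A) (hAs : ∀ s, (As s).Nonempty)
    (P R : S → A → S → ℝ) (γ : ℝ) (g : S → A → Ω → ℝ) (hg : ∀ s a, Integrable (g s a) μ) :
    ∀ n s a, Integrable (fun ω => stepValue As hAs P R γ (fun s' a' => g s' a' ω) n s a) μ
  | 0, s, a => hg s a
  | n + 1, s, a => by
      simp only [stepValue]
      apply integrable_finset_sum
      intro s' _
      exact (((integrable_const _).add
        ((integrable_finsetSup' _ (hAs s') _ fun a' _ =>
          integrable_stepValue As hAs P R γ g hg n s' a').const_mul γ)).const_mul _)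

lemma stepValue_le_integral {Ω S A : Type*} {mΩ : MeasurableSpace Ω} (μ : Measure Ω)
    [IsProbabilityMeasure μ] [Fintype S] (As : S → Finset A) (hAs : ∀ s, (As s).Nonempty)
    (P R : S → A → S → ℝ) (hP : ∀ s a s', 0 ≤ P s a s') (γ : ℝ) (hγ : 0 ≤ γ)
    (Z : S → A → Ω → ℝ) (hZ : ∀ s a, Integrable (Z s a) μ)
    (m : MeasurableSpace Ω) (hm : m ≤ mΩ) :
    ∀ n s a, stepValue As hAs P R γ (fun s' a' => ∫ ω, Z s' a' ω ∂μ) n s a ≤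
      ∫ ω, stepValue As hAs P R γ (fun s' a' => (μ[Z s' a'|m]) ω) n s a ∂μ
  | 0, s, a => by
      simp only [stepValue]
      rw [integral_condExp hm]
  | n + 1, s, a => by
      have hZi : ∀ s a, Integrable (fun ω => (μ[Z s a|m]) ω) μ := fun s a => integrable_condExp
      have hint : ∀ s' a', Integrable
          (fun ω => stepValue As hAs P R γ (fun s'' a'' => (μ[Z s'' a''|m]) ω) n s' a') μ :=
        fun s' a' => integrable_stepValue As hAs P R γ _ hZi n s' a'
      have hsupint : ∀ s' : S, Integrable (fun ω =>
          (As s').sup' (hAs s') fun a' =>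
            stepValue As hAs P R γ (fun s'' a'' => (μ[Z s'' a''|m]) ω) n s' a') μ :=
        fun s' => integrable_finsetSup' _ (hAs s') _ fun a' _ => hint s' a'
      simp only [stepValue]
      rw [integral_finset_sum]
      · apply Finset.sum_le_sum
        intro s' _
        rw [integral_const_mul, integral_add (integrable_const _) ((hsupint s').const_mul γ),
          integral_const, integral_const_mul]
        simp only [measure_univ, probReal_univ, ENNReal.toReal_one, smul_eq_mul, one_mul]
        apply mul_le_mul_of_nonneg_left _ (hP s a s')
        apply add_le_add_right
        apply mul_le_mul_of_nonneg_left _ hγ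
        apply Finset.sup'_le
        intro a' ha'
        calc stepValue As hAs P R γ (fun s'' a'' => ∫ ω, Z s'' a'' ω ∂μ) n s' a'
            ≤ ∫ ω, stepValue As hAs P R γ (fun s'' a'' => (μ[Z s'' a''|m]) ω) n s' a' ∂μ :=
              stepValue_le_integral μ As hAs P R hP γ hγ Z hZ m hm n s' a'
          _ ≤ _ := integral_mono (hint s' a') (hsupint s')
              (fun ω => Finset.le_sup' (f := fun a'' =>
                stepValue As hAs P R γ (fun s'' a''' => (μ[Z s'' a'''|m]) ω) n s' a'') ha')
      · intro s' _
        exact (((integrable_const _).add ((hsupint s').const_mul γ)).const_mul _)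

/-- VOC dominates VOC' for static values in MDPs: if `a* ∈ A_s` maximizes
`a ↦ φ_n(s,a)` over `A_s`, then
`E[max_{a ∈ A_s} φ_n^𝒢(s,a)] − max_{a ∈ A_s} φ_n(s,a)
  ≥ E[max_{a ∈ A_s} φ_n^𝒢(s,a) − φ_n^𝒢(s,a*)]`. -/
theorem voc_stmt18 {Ω S A : Type*} {mΩ : MeasurableSpace Ω} (μ : Measure Ω)
    [IsProbabilityMeasure μ] [Fintype S] [Nonempty S] [Fintype A] [Nonempty A]
    (As : S → Finset A) (hAs : ∀ s, (As s).Nonempty) (P R : S → A → S → ℝ)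
    (hP : ∀ s a s', 0 ≤ P s a s') (hPsum : ∀ s a, ∑ s', P s a s' = 1)
    (γ : ℝ) (hγ : 0 ≤ γ) (Z : S → A → Ω → ℝ) (hZ : ∀ s a, Integrable (Z s a) μ)
    (m : MeasurableSpace Ω) (hm : m ≤ mΩ) (n : ℕ) (s : S)
    (astar : A) (hastar_mem : astar ∈ As s)
    (hastar : ∀ a ∈ As s,
      stepValue As hAs P R γ (fun s' a' => ∫ ω, Z s' a' ω ∂μ) n s a ≤
        stepValue As hAs P R γ (fun s' a' => ∫ ω, Z s' a' ω ∂μ) n s astar) :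
    (∫ ω, (((As s).sup' (hAs s) fun a =>
          stepValue As hAs P R γ (fun s' a' => (μ[Z s' a'|m]) ω) n s a) -
        stepValue As hAs P R γ (fun s' a' => (μ[Z s' a'|m]) ω) n s astar) ∂μ) ≤
      (∫ ω, (As s).sup' (hAs s)
          (fun a => stepValue As hAs P R γ (fun s' a' => (μ[Z s' a'|m]) ω) n s a) ∂μ) -
        (As s).sup' (hAs s)
          fun a => stepValue As hAs P R γ (fun s' a' => ∫ ω, Z s' a' ω ∂μ) n s a := by
  have hZi : ∀ s a, Integrable (fun ω => (μ[Z s a|m]) ω) μ := fun s a => integrable_condExp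
  have hint : ∀ a, Integrable
      (fun ω => stepValue As hAs P R γ (fun s' a' => (μ[Z s' a'|m]) ω) n s a) μ :=
    fun a => integrable_stepValue As hAs P R γ _ hZi n s a
  have hsupint : Integrable (fun ω => (As s).sup' (hAs s)
      fun a => stepValue As hAs P R γ (fun s' a' => (μ[Z s' a'|m]) ω) n s a) μ :=
    integrable_finsetSup' _ (hAs s) _ fun a _ => hint a
  have hsup_eq : ((As s).sup' (hAs s)
      fun a => stepValue As hAs P R γ (fun s' a' => ∫ ω, Z s' a' ω ∂μ) n s a) =
      stepValue As hAs P R γ (fun s' a' => ∫ ω, Z s' a' ω ∂μ) n s astar :=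
    le_antisymm (Finset.sup'_le _ _ hastar) (Finset.le_sup' _ hastar_mem)
  rw [integral_sub hsupint (hint astar), hsup_eq]
  exact sub_le_sub_left (stepValue_le_integral μ As hAs P R hP γ hγ Z hZ m hm n s astar) _
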